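/- Let (X, P) be a finite poset partitioned into three sets S_1, S_2, S_3 such that S_2 < S_3 < S_1 in P except for a distinguished subset C ⊆ S_1 ∪ S_2 which is completely incomparable to S_3. Suppose there exist linear orders L_1, L_2 on X such that L_1 ∩ L_2 restricted to each of S_1 ∪ S_2 and S_3 equals P restricted to those sets, with S_2 < C ∩ S_1 < S_3 < S_1 \ C in L_1 and S_2 \ C < S_3 < C ∩ S_2 < S_1 in L_2 (where C ∩ S_2 < S_1 holds since C ∩ S_2 ⊆ S_2), and where all elements of C ∩ S_1 are below all of S_1 \ C in L_1 and all elements of C ∩ S_2 are above all of S_2 \ C in L_2. Then L_1 ∩ L_2 = P, so dim(X, P) ≤ 2. -/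

import Mathlib

theorem stmt6 {X : Type*} [Fintype X]
    (P : X → X → Prop) (hPo : IsPartialOrder X P)
    (S₁ S₂ S₃ C : Set X)
    (hcover : S₁ ∪ S₂ ∪ S₃ = Set.univ)
    (hd12 : Disjoint S₁ S₂) (hd13 : Disjoint S₁ S₃) (hd23 : Disjoint S₂ S₃)
    (hC : C ⊆ S₁ ∪ S₂)
    (h23 : ∀ x ∈ S₂ \ C, ∀ y ∈ S₃, P x y)
    (h31 : ∀ y ∈ S₃, ∀ z ∈ S₁ \ C, P y z)
    (hinc : ∀ u ∈ C, ∀ y ∈ S₃, ¬ P u y ∧ ¬ P y u)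
    (l₁ l₂ : X → X → Prop) (hl₁ : IsLinearOrder X l₁) (hl₂ : IsLinearOrder X l₂)
    (hres12 : ∀ x ∈ S₁ ∪ S₂, ∀ y ∈ S₁ ∪ S₂, (l₁ x y ∧ l₂ x y ↔ P x y))
    (hres3 : ∀ x ∈ S₃, ∀ y ∈ S₃, (l₁ x y ∧ l₂ x y ↔ P x y))
    (hblocks1 : ∀ i j : Fin 4, i < j →
      ∀ x ∈ (![S₂, C ∩ S₁, S₃, S₁ \ C] : Fin 4 → Set X) i,
        ∀ y ∈ (![S₂, C ∩ S₁, S₃, S₁ \ C] : Fin 4 → Set X) j, l₁ x y ∧ x ≠ y)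
    (hblocks2 : ∀ i j : Fin 4, i < j →
      ∀ x ∈ (![S₂ \ C, S₃, C ∩ S₂, S₁] : Fin 4 → Set X) i,
        ∀ y ∈ (![S₂ \ C, S₃, C ∩ S₂, S₁] : Fin 4 → Set X) j, l₂ x y ∧ x ≠ y) :
    ∀ x y, P x y ↔ l₁ x y ∧ l₂ x y := by
  have total : ∀ x : X, x ∈ S₁ ∨ x ∈ S₂ ∨ x ∈ S₃ := by
    intro x
    have hx : x ∈ S₁ ∪ S₂ ∪ S₃ := hcover ▸ Set.mem_univ x
    rcases hx with (h | h) | h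
    · exact Or.inl h
    · exact Or.inr (Or.inl h)
    · exact Or.inr (Or.inr h)
  have na1 : ∀ {x y : X}, l₁ y x → y ≠ x → ¬ l₁ x y := by
    intro x y h hne h'
    exact hne (hl₁.toIsPartialOrder.toAntisymm.antisymm _ _ h h')
  have na2 : ∀ {x y : X}, l₂ y x → y ≠ x → ¬ l₂ x y := by
    intro x y h hne h'
    exact hne (hl₂.toIsPartialOrder.toAntisymm.antisymm _ _ h h')
  have nP : ∀ {x y : X}, P y x → y ≠ x → ¬ P x y := by
    intro x y h hne h'
    exact hne (hPo.toAntisymm.antisymm _ _ h h')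
  intro x y
  rcases total x with hx | hx | hx <;> rcases total y with hy | hy | hy
  -- x ∈ S₁
  · exact (hres12 x (Or.inl hx) y (Or.inl hy)).symm
  · exact (hres12 x (Or.inl hx) y (Or.inr hy)).symm
  · -- x ∈ S₁, y ∈ S₃ : both sides false
    have hne : y ≠ x := fun h => hd13.ne_of_mem hx hy (h.symm)
    have hl2yx := (hblocks2 1 3 (by decide) y hy x hx).1
    have hnl2 : ¬ l₂ x y := na2 hl2yx hne
    have hnP : ¬ P x y := by
      by_cases hxC : x ∈ C
      · exact (hinc x hxC y hy).1
      · exact nP (h31 y hy x ⟨hx, hxC⟩) hne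
    exact iff_of_false hnP (fun h => hnl2 h.2)
  -- x ∈ S₂
  · exact (hres12 x (Or.inr hx) y (Or.inl hy)).symm
  · exact (hres12 x (Or.inr hx) y (Or.inr hy)).symm
  · -- x ∈ S₂, y ∈ S₃
    by_cases hxC : x ∈ C
    · have hl2yx := (hblocks2 1 2 (by decide) y hy x ⟨hxC, hx⟩).1
      have hne : y ≠ x := fun h => hd23.ne_of_mem hx hy h.symm
      exact iff_of_false (hinc x hxC y hy).1 (fun h => na2 hl2yx hne h.2)
    · have hl1 := (hblocks1 0 2 (by decide) x hx y hy).1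
      have hl2 := (hblocks2 0 1 (by decide) x ⟨hx, hxC⟩ y hy).1
      exact iff_of_true (h23 x ⟨hx, hxC⟩ y hy) ⟨hl1, hl2⟩
  -- x ∈ S₃
  · -- x ∈ S₃, y ∈ S₁
    by_cases hyC : y ∈ C
    · have hl1yx := (hblocks1 1 2 (by decide) y ⟨hyC, hy⟩ x hx).1
      have hne : y ≠ x := fun h => hd13.ne_of_mem hy hx h
      exact iff_of_false (hinc y hyC x hx).2 (fun h => na1 hl1yx hne h.1)
    · have hl1 := (hblocks1 2 3 (by decide) x hx y ⟨hy, hyC⟩).1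
      have hl2 := (hblocks2 1 3 (by decide) x hx y hy).1
      exact iff_of_true (h31 x hx y ⟨hy, hyC⟩) ⟨hl1, hl2⟩
  · -- x ∈ S₃, y ∈ S₂ : both false
    have hne : y ≠ x := fun h => hd23.ne_of_mem hy hx h
    have hl1yx := (hblocks1 0 2 (by decide) y hy x hx).1
    have hnP : ¬ P x y := by
      by_cases hyC : y ∈ C
      · exact (hinc y hyC x hx).2
      · exact nP (h23 y ⟨hy, hyC⟩ x hx) hne
    exact iff_of_false hnP (fun h => na1 hl1yx hne h.1)
  · exact (hres3 x hx y hy).symm
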